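/- Let C ⊆ 2^{[n]} be a code realized by convex open sets V_1,...,V_n inside a convex open polyhedron X ⊆ R^d, where each V_i is a finite intersection of open half-spaces U_{i1},...,U_{ik_i} and X = X_1 ∩ ... ∩ X_k for open half-spaces X_j. Let H be the code of the full half-space arrangement {U_{i1},...,U_{nk_n}, X_1,...,X_k} relative to R^d, and let H' = Tk_H({indices of X_1,...,X_k}). Then the morphism f: H' → 2^{[n]} defined by the trunks T_i = Tk_{H'}({i1,...,ik_i}) satisfies f(H') = C. -/
import Mathlib


/-- The code of the cover `U` relative to the ambient set `Xs`. -/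
def codeOf {α ι : Type*} [Fintype ι] (U : ι → Set α) (Xs : Set α) :
    Set (Finset ι) :=
  {τ | ((Xs ∩ ⋂ i ∈ τ, U i) \ ⋃ j, ⋃ (_ : j ∉ τ), U j).Nonempty}

/-- The trunk of `σ` in a code `C`. -/
def Tk {V : Type*} (C : Set (Finset V)) (σ : Finset V) : Set (Finset V) :=
  {τ ∈ C | σ ⊆ τ}

/-- A polytope code is the image of a hyperplane-arrangement code: if `C` is realized by
`V_i = ⋂_j U_{ij}` inside `X = ⋂_j X_j` (all `U_{ij}`, `X_j` open half-spaces), `H` is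
the code of the full half-space arrangement, and `H'` its trunk on the indices of the
`X_j`, then the morphism defined by the trunks `T_i = Tk_{H'}({i1,…,ik_i})` maps `H'`
onto `C`. -/
theorem stmt17 {d n k : ℕ} (ki : Fin n → ℕ)
    (U : (i : Fin n) → Fin (ki i) → Set (Fin d → ℝ))
    (Xh : Fin k → Set (Fin d → ℝ))
    (hU : ∀ i j, ∃ (f : (Fin d → ℝ) →ₗ[ℝ] ℝ) (c : ℝ), U i j = {x | c < f x})
    (hX : ∀ j, ∃ (f : (Fin d → ℝ) →ₗ[ℝ] ℝ) (c : ℝ), Xh j = {x | c < f x}) :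
    (fun c : Finset ((Σ i : Fin n, Fin (ki i)) ⊕ Fin k) =>
        Finset.univ.filter (fun i : Fin n =>
          (Finset.univ.image (fun j : Fin (ki i) =>
            (Sum.inl ⟨i, j⟩ : (Σ i : Fin n, Fin (ki i)) ⊕ Fin k))) ⊆ c)) ''
      Tk (codeOf (Sum.elim (fun p : Σ i : Fin n, Fin (ki i) => U p.1 p.2) Xh)
            Set.univ)
        (Finset.univ.image (fun j : Fin k =>
          (Sum.inr j : (Σ i : Fin n, Fin (ki i)) ⊕ Fin k))) =
    codeOf (fun i : Fin n => ⋂ j : Fin (ki i), U i j) (⋂ j : Fin k, Xh j) := by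
  classical
  ext σ
  constructor
  · rintro ⟨τ, ⟨⟨x, hx⟩, hτ⟩, rfl⟩
    have hmem : ∀ s ∈ τ, x ∈ Sum.elim (fun p : Σ i : Fin n, Fin (ki i) => U p.1 p.2) Xh s :=
      fun s hs => Set.mem_iInter₂.1 hx.1.2 s hs
    have hnot : ∀ s, s ∉ τ → x ∉ Sum.elim (fun p : Σ i : Fin n, Fin (ki i) => U p.1 p.2) Xh s :=
      fun s hs hm => hx.2 (Set.mem_iUnion₂.2 ⟨s, hs, hm⟩)
    have hXτ : ∀ j : Fin k, (Sum.inr j : (Σ i : Fin n, Fin (ki i)) ⊕ Fin k) ∈ τ :=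
      fun j => hτ (Finset.mem_image_of_mem _ (Finset.mem_univ j))
    refine ⟨x, ⟨⟨Set.mem_iInter.2 fun j => hmem _ (hXτ j), ?_⟩, ?_⟩⟩
    · refine Set.mem_iInter₂.2 fun i hi => Set.mem_iInter.2 fun j => ?_
      have := (Finset.mem_filter.1 hi).2 (Finset.mem_image_of_mem _ (Finset.mem_univ j))
      exact hmem _ this
    · intro hx'
      obtain ⟨i, hi, hxi⟩ := Set.mem_iUnion₂.1 hx'
      apply hi
      refine Finset.mem_filter.2 ⟨Finset.mem_univ _, fun s hs => ?_⟩
      obtain ⟨j, -, rfl⟩ := Finset.mem_image.1 hs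
      by_contra hsτ
      exact hnot _ hsτ (Set.mem_iInter.1 hxi j)
  · rintro ⟨x, ⟨⟨hxX, hxσ⟩, hxout⟩⟩
    set W := Sum.elim (fun p : Σ i : Fin n, Fin (ki i) => U p.1 p.2) Xh with hW
    refine ⟨Finset.univ.filter (fun s => x ∈ W s), ⟨⟨x, ⟨⟨trivial, ?_⟩, ?_⟩⟩, ?_⟩, ?_⟩
    · exact Set.mem_iInter₂.2 fun s hs => (Finset.mem_filter.1 hs).2
    · intro hx'
      obtain ⟨s, hs, hxs⟩ := Set.mem_iUnion₂.1 hx'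
      exact hs (Finset.mem_filter.2 ⟨Finset.mem_univ _, hxs⟩)
    · intro s hs
      obtain ⟨j, -, rfl⟩ := Finset.mem_image.1 hs
      exact Finset.mem_filter.2 ⟨Finset.mem_univ _, Set.mem_iInter.1 hxX j⟩
    · ext i
      simp only [Finset.mem_filter, Finset.mem_univ, true_and]
      constructor
      · intro hsub
        by_contra hi
        apply hxout
        refine Set.mem_iUnion₂.2 ⟨i, hi, Set.mem_iInter.2 fun j => ?_⟩
        have := hsub (Finset.mem_image_of_mem _ (Finset.mem_univ j))
        exact (Finset.mem_filter.1 this).2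
      · intro hi s hs
        obtain ⟨j, -, rfl⟩ := Finset.mem_image.1 hs
        exact Finset.mem_filter.2 ⟨Finset.mem_univ _,
          Set.mem_iInter.1 (Set.mem_iInter₂.1 hxσ i hi) j⟩
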